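/- Let U ⊆ ℝ^(n+2) be open, (ξ, N) a null frame on U, and Z : U → ℝ^(n+2) a differentiable closed conformal field with conformal factor φ : U → ℝ. Assume: (i) η(Z p, Z p) ≠ 0 for all p ∈ U and there is ε ∈ {-1, 1} with ε * η(Z p, Z p) > 0 for all p ∈ U; (ii) at every p ∈ U both A*_ξ(p) and A_N(p) are symmetric on screen vectors; (iii) (constant angle) for every p ∈ U and every screen vector v at p, the functions q ↦ η(Z q, ξ q)/√(ε * η(Z q, Z q)) and q ↦ η(Z q, N q)/√(ε * η(Z q, Z q)) have vanishing derivative at p in the direction v. Then for every p ∈ U the screen part Z*(p) is a principal direction of A_{Z⊥}(p): A_{Z⊥}(p)(Z*(p)) = -2 * ε * (η(Z p, ξ p)/√(ε * η(Z p, Z p))) * (η(Z p, N p)/√(ε * η(Z p, Z p))) * φ(p) • Z*(p). (Flat-Minkowski-ambient form of the paper's theorem that a screen integrable constant angle null hypersurface with respect to a closed conformal field has a canonical principal direction, with the explicit eigenvalue.) -/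

import Mathlib

open scoped BigOperators

noncomputable section

/-- Euclidean space `ℝ^m`. -/
abbrev E (m : ℕ) : Type := EuclideanSpace ℝ (Fin m)

/-- The Minkowski bilinear form `η(x,y) = -(x 0)(y 0) + ∑_{i≥1} (x i)(y i)` on `ℝ^(n+2)`. -/
def eta {n : ℕ} (x y : E (n + 2)) : ℝ :=
  (∑ i, x i * y i) - 2 * (x 0 * y 0)

/-- Screen projection `P_p(w) = w - η(w,N)ξ - η(w,ξ)N` determined by the null frame at a point. -/
def sproj {n : ℕ} (xi N w : E (n + 2)) : E (n + 2) :=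
  w - eta w N • xi - eta w xi • N

/-- Screen shape operator `A*_ξ(p)(v) = -P_p(D_v ξ (p))`. -/
def Astar {n : ℕ} (xi N : E (n + 2) → E (n + 2)) (p v : E (n + 2)) : E (n + 2) :=
  -sproj (xi p) (N p) (fderiv ℝ xi p v)

/-- Shape operator `A_N(p)(v) = -P_p(D_v N (p))`. -/
def AN {n : ℕ} (xi N : E (n + 2) → E (n + 2)) (p v : E (n + 2)) : E (n + 2) :=
  -sproj (xi p) (N p) (fderiv ℝ N p v)

/-- Transversal one-form `τ_p(v) = η(D_v N(p), ξ p)`. -/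
def tau {n : ℕ} (xi N : E (n + 2) → E (n + 2)) (p v : E (n + 2)) : ℝ :=
  eta (fderiv ℝ N p v) (xi p)

/-- Screen part `Z*(p) = P_p(Z p)` of a vector field. -/
def Zstar {n : ℕ} (xi N Z : E (n + 2) → E (n + 2)) (p : E (n + 2)) : E (n + 2) :=
  sproj (xi p) (N p) (Z p)

/-- `A_{Z⊥}(p)(v) = η(Z p, N p) • A*_ξ(p)(v) + η(Z p, ξ p) • A_N(p)(v)`. -/
def AZperp {n : ℕ} (xi N Z : E (n + 2) → E (n + 2)) (p v : E (n + 2)) : E (n + 2) :=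
  eta (Z p) (N p) • Astar xi N p v + eta (Z p) (xi p) • AN xi N p v

/-! ### Auxiliary lemmas -/

section Aux

variable {n : ℕ}

lemma eta_comm (x y : E (n + 2)) : eta x y = eta y x := by
  simp [eta, mul_comm]

lemma eta_add_left (x y z : E (n + 2)) : eta (x + y) z = eta x z + eta y z := by
  simp [eta, add_mul, Finset.sum_add_distrib]; ring

lemma eta_smul_left (c : ℝ) (x z : E (n + 2)) : eta (c • x) z = c * eta x z := by
  simp [eta, mul_assoc, ← Finset.mul_sum]; ring

lemma eta_sub_left (x y z : E (n + 2)) : eta (x - y) z = eta x z - eta y z := by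
  simp [eta, sub_mul, Finset.sum_sub_distrib]; ring

lemma eta_neg_left (x z : E (n + 2)) : eta (-x) z = -eta x z := by
  simp [eta]; ring

lemma eta_add_right (x y z : E (n + 2)) : eta x (y + z) = eta x y + eta x z := by
  rw [eta_comm, eta_add_left, eta_comm y x, eta_comm z x]

lemma eta_smul_right (c : ℝ) (x z : E (n + 2)) : eta x (c • z) = c * eta x z := by
  rw [eta_comm, eta_smul_left, eta_comm z x]

lemma eta_sub_right (x y z : E (n + 2)) : eta x (y - z) = eta x y - eta x z := by
  rw [eta_comm, eta_sub_left, eta_comm y x, eta_comm z x]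

/-- The Minkowski form as a continuous bilinear map. -/
def etaL (n : ℕ) : E (n + 2) →L[ℝ] E (n + 2) →L[ℝ] ℝ :=
  (innerSL ℝ : E (n + 2) →L[ℝ] E (n + 2) →L[ℝ] ℝ)
    - (2 : ℝ) • ((EuclideanSpace.proj (0 : Fin (n + 2))).smulRight
        (EuclideanSpace.proj (0 : Fin (n + 2))))

lemma etaL_apply (x y : E (n + 2)) : etaL n x y = eta x y := by
  simp [etaL, eta, innerSL_apply_apply, PiLp.inner_apply, RCLike.inner_apply, starRingEnd_apply]
  change inner ℝ x y = _
  simp [PiLp.inner_apply, mul_comm]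

lemma hasFDerivAt_eta {f g : E (n + 2) → E (n + 2)} {f' g' : E (n + 2) →L[ℝ] E (n + 2)}
    {p : E (n + 2)} (hf : HasFDerivAt f f' p) (hg : HasFDerivAt g g' p) :
    HasFDerivAt (fun q => eta (f q) (g q))
      (((etaL n) (f p)).comp g' + ((etaL n).comp f').flip (g p)) p := by
  have h1 : HasFDerivAt (fun q => (etaL n) (f q)) ((etaL n).comp f') p :=
    ((etaL n).hasFDerivAt).comp p hf
  have h2 := h1.clm_apply hg
  simpa only [etaL_apply] using h2

lemma differentiableAt_eta {f g : E (n + 2) → E (n + 2)} {p : E (n + 2)}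
    (hf : DifferentiableAt ℝ f p) (hg : DifferentiableAt ℝ g p) :
    DifferentiableAt ℝ (fun q => eta (f q) (g q)) p :=
  (hasFDerivAt_eta hf.hasFDerivAt hg.hasFDerivAt).differentiableAt

lemma fderiv_eta {f g : E (n + 2) → E (n + 2)} {p : E (n + 2)}
    (hf : DifferentiableAt ℝ f p) (hg : DifferentiableAt ℝ g p) (v : E (n + 2)) :
    fderiv ℝ (fun q => eta (f q) (g q)) p v =
      eta (f p) (fderiv ℝ g p v) + eta (fderiv ℝ f p v) (g p) := by
  rw [(hasFDerivAt_eta hf.hasFDerivAt hg.hasFDerivAt).fderiv]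
  simp [etaL_apply]

lemma eta_nondeg {w : E (n + 2)} (h : ∀ u : E (n + 2), eta w u = 0) : w = 0 := by
  ext i
  by_cases hi : i = 0
  · subst hi
    have h0 := h (EuclideanSpace.single 0 1)
    simp [eta, EuclideanSpace.single_apply] at h0
    have h0' : w 0 = 0 := by linarith
    simp [h0']
  · have hi' := h (EuclideanSpace.single i 1)
    simp [eta, EuclideanSpace.single_apply, Ne.symm hi] at hi'
    simp [hi']

lemma sproj_screen_xi {xi N : E (n + 2)} (hxx : eta xi xi = 0) (hxN : eta xi N = 1)
    (w : E (n + 2)) : eta (sproj xi N w) xi = 0 := by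
  have hNx : eta N xi = 1 := by rw [eta_comm]; exact hxN
  simp [sproj, eta_sub_left, eta_smul_left, hxx, hNx]

lemma sproj_screen_N {xi N : E (n + 2)} (hNN : eta N N = 0) (hxN : eta xi N = 1)
    (w : E (n + 2)) : eta (sproj xi N w) N = 0 := by
  simp [sproj, eta_sub_left, eta_smul_left, hNN, hxN]

end Aux

/-- A screen integrable constant angle null hypersurface with respect to a
closed conformal field has a canonical principal direction, with explicit eigenvalue
(flat Minkowski ambient form). -/
theorem constant_angle_canonical_principal_direction {n : ℕ}
    (U : Set (E (n + 2))) (hU : IsOpen U)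
    (ξ N Z : E (n + 2) → E (n + 2)) (φ : E (n + 2) → ℝ) (ε : ℝ)
    (hξd : ∀ p ∈ U, DifferentiableAt ℝ ξ p)
    (hNd : ∀ p ∈ U, DifferentiableAt ℝ N p)
    (hZd : ∀ p ∈ U, DifferentiableAt ℝ Z p)
    (hξξ : ∀ p ∈ U, eta (ξ p) (ξ p) = 0)
    (hNN : ∀ p ∈ U, eta (N p) (N p) = 0)
    (hξN : ∀ p ∈ U, eta (ξ p) (N p) = 1)
    (hCC : ∀ p ∈ U, fderiv ℝ Z p = φ p • ContinuousLinearMap.id ℝ (E (n + 2)))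
    (hZ0 : ∀ p ∈ U, eta (Z p) (Z p) ≠ 0)
    (hε : ε = -1 ∨ ε = 1)
    (hεZ : ∀ p ∈ U, 0 < ε * eta (Z p) (Z p))
    (hAsym : ∀ p ∈ U, ∀ v w : E (n + 2),
      eta v (ξ p) = 0 → eta v (N p) = 0 → eta w (ξ p) = 0 → eta w (N p) = 0 →
      eta (Astar ξ N p v) w = eta v (Astar ξ N p w))
    (hANsym : ∀ p ∈ U, ∀ v w : E (n + 2),
      eta v (ξ p) = 0 → eta v (N p) = 0 → eta w (ξ p) = 0 → eta w (N p) = 0 →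
      eta (AN ξ N p v) w = eta v (AN ξ N p w))
    (hangξ : ∀ p ∈ U, ∀ v : E (n + 2), eta v (ξ p) = 0 → eta v (N p) = 0 →
      fderiv ℝ (fun q => eta (Z q) (ξ q) / Real.sqrt (ε * eta (Z q) (Z q))) p v = 0)
    (hangN : ∀ p ∈ U, ∀ v : E (n + 2), eta v (ξ p) = 0 → eta v (N p) = 0 →
      fderiv ℝ (fun q => eta (Z q) (N q) / Real.sqrt (ε * eta (Z q) (Z q))) p v = 0) :
    ∀ p ∈ U, AZperp ξ N Z p (Zstar ξ N Z p) =
      (-2 * ε * (eta (Z p) (ξ p) / Real.sqrt (ε * eta (Z p) (Z p))) *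
        (eta (Z p) (N p) / Real.sqrt (ε * eta (Z p) (Z p))) * φ p) • Zstar ξ N Z p := by
  intro p hp
  -- abbreviations
  set a : ℝ := eta (Z p) (ξ p) with ha_def
  set b : ℝ := eta (Z p) (N p) with hb_def
  set c : ℝ := eta (Z p) (Z p) with hc_def
  set ρ : ℝ := Real.sqrt (ε * c) with hρ_def
  have hε0 : ε ≠ 0 := by rcases hε with h | h <;> rw [h] <;> norm_num
  have hε2 : ε * ε = 1 := by rcases hε with h | h <;> rw [h] <;> norm_num
  have hc0 : c ≠ 0 := hZ0 p hp
  have hεc : 0 < ε * c := hεZ p hp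
  have hρ0 : ρ ≠ 0 := by
    rw [hρ_def]; exact (Real.sqrt_ne_zero'.mpr hεc)
  have hρ2 : ρ * ρ = ε * c := Real.mul_self_sqrt hεc.le
  -- the derivative of Z
  have hZv : ∀ v : E (n + 2), fderiv ℝ Z p v = φ p • v := by
    intro v; rw [hCC p hp]; simp
  -- derivatives of null-frame relations
  have hconst : ∀ (f g : E (n + 2) → E (n + 2)) (k : ℝ),
      DifferentiableAt ℝ f p → DifferentiableAt ℝ g p →
      (∀ q ∈ U, eta (f q) (g q) = k) →
      ∀ v : E (n + 2), eta (f p) (fderiv ℝ g p v) + eta (fderiv ℝ f p v) (g p) = 0 := by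
    intro f g k hf hg hk v
    have heq : (fun q => eta (f q) (g q)) =ᶠ[nhds p] (fun _ => k) :=
      Filter.eventuallyEq_of_mem (hU.mem_nhds hp) fun q hq => hk q hq
    have h0 : fderiv ℝ (fun q => eta (f q) (g q)) p = 0 := by
      rw [heq.fderiv_eq]; exact fderiv_const_apply k
    have := fderiv_eta hf hg v
    rw [h0] at this
    simpa using this.symm
  have hdξξ : ∀ v : E (n + 2), eta (fderiv ℝ ξ p v) (ξ p) = 0 := by
    intro v
    have := hconst ξ ξ 0 (hξd p hp) (hξd p hp) hξξ v
    have hsymm : eta (ξ p) (fderiv ℝ ξ p v) = eta (fderiv ℝ ξ p v) (ξ p) := eta_comm _ _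
    rw [hsymm] at this; linarith
  have hdNN : ∀ v : E (n + 2), eta (fderiv ℝ N p v) (N p) = 0 := by
    intro v
    have := hconst N N 0 (hNd p hp) (hNd p hp) hNN v
    have hsymm : eta (N p) (fderiv ℝ N p v) = eta (fderiv ℝ N p v) (N p) := eta_comm _ _
    rw [hsymm] at this; linarith
  have hdξN : ∀ v : E (n + 2), eta (fderiv ℝ ξ p v) (N p) = -eta (fderiv ℝ N p v) (ξ p) := by
    intro v
    have := hconst ξ N 1 (hξd p hp) (hNd p hp) hξN v
    have hsymm : eta (ξ p) (fderiv ℝ N p v) = eta (fderiv ℝ N p v) (ξ p) := eta_comm _ _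
    rw [hsymm] at this; linarith
  -- derivative of ρ-function
  have hZdp := hZd p hp
  have hZZd : DifferentiableAt ℝ (fun q => eta (Z q) (Z q)) p := differentiableAt_eta hZdp hZdp
  have hZZ' : ∀ v : E (n + 2), fderiv ℝ (fun q => eta (Z q) (Z q)) p v = 2 * φ p * eta (Z p) v := by
    intro v
    rw [fderiv_eta hZdp hZdp v, hZv v, eta_smul_right, eta_smul_left, eta_comm v (Z p)]
    ring
  have hcεd : HasFDerivAt (fun q => ε * eta (Z q) (Z q))
      (ε • fderiv ℝ (fun q => eta (Z q) (Z q)) p) p := hZZd.hasFDerivAt.const_mul ε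
  have hρf : HasFDerivAt (fun q => Real.sqrt (ε * eta (Z q) (Z q)))
      ((1 / (2 * ρ)) • (ε • fderiv ℝ (fun q => eta (Z q) (Z q)) p)) p := by
    have := hcεd.sqrt (ne_of_gt hεc)
    simpa [hρ_def] using this
  have hρfd := hρf.differentiableAt
  have hρ' : ∀ v : E (n + 2),
      fderiv ℝ (fun q => Real.sqrt (ε * eta (Z q) (Z q))) p v = ε * φ p * eta (Z p) v / ρ := by
    intro v
    rw [hρf.fderiv]
    simp only [ContinuousLinearMap.coe_smul', Pi.smul_apply, smul_eq_mul]
    rw [hZZ' v]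
    field_simp
  have hρU : ∀ q ∈ U, Real.sqrt (ε * eta (Z q) (Z q)) ≠ 0 := fun q hq =>
    Real.sqrt_ne_zero'.mpr (hεZ q hq)
  -- generic constant-angle consequence
  have hkey : ∀ (W : E (n + 2) → E (n + 2)), DifferentiableAt ℝ W p →
      (∀ v : E (n + 2), eta v (ξ p) = 0 → eta v (N p) = 0 →
        fderiv ℝ (fun q => eta (Z q) (W q) / Real.sqrt (ε * eta (Z q) (Z q))) p v = 0) →
      ∀ v : E (n + 2), eta v (ξ p) = 0 → eta v (N p) = 0 →
        fderiv ℝ (fun q => eta (Z q) (W q)) p v =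
          (eta (Z p) (W p) / c) * (φ p * eta (Z p) v) := by
    intro W hWd hang v hv1 hv2
    have hAd : DifferentiableAt ℝ (fun q => eta (Z q) (W q)) p := differentiableAt_eta hZdp hWd
    have hfd : DifferentiableAt ℝ
        (fun q => eta (Z q) (W q) / Real.sqrt (ε * eta (Z q) (Z q))) p := by
      have : (fun q => eta (Z q) (W q) / Real.sqrt (ε * eta (Z q) (Z q)))
          = fun q => eta (Z q) (W q) * (Real.sqrt (ε * eta (Z q) (Z q)))⁻¹ := by
        funext q; rw [div_eq_mul_inv]
      rw [this]
      exact hAd.mul (hρfd.inv hρ0)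
    have hev : (fun q => eta (Z q) (W q)) =ᶠ[nhds p]
        (fun q => (eta (Z q) (W q) / Real.sqrt (ε * eta (Z q) (Z q))) *
          Real.sqrt (ε * eta (Z q) (Z q))) :=
      Filter.eventuallyEq_of_mem (hU.mem_nhds hp)
        (fun q hq => (div_mul_cancel₀ _ (hρU q hq)).symm)
    have hmul := fderiv_fun_mul hfd hρfd
    have hfe : fderiv ℝ (fun q => eta (Z q) (W q)) p =
        fderiv ℝ (fun q => (eta (Z q) (W q) / Real.sqrt (ε * eta (Z q) (Z q))) *
          Real.sqrt (ε * eta (Z q) (Z q))) p := hev.fderiv_eq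
    rw [hfe, hmul]
    simp only [ContinuousLinearMap.add_apply, ContinuousLinearMap.coe_smul', Pi.smul_apply,
      smul_eq_mul]
    rw [hang v hv1 hv2, hρ' v]
    have hWp : (eta (Z p) (W p) / Real.sqrt (ε * eta (Z p) (Z p))) = eta (Z p) (W p) / ρ := by
      rw [hρ_def, hc_def]
    rw [hWp]
    field_simp
    rw [mul_comm ρ ρ] at *
    -- eta (Z p)(W p) * (ε * φ p * eta (Z p) v) * c = eta (Z p)(W p) * (φ p * eta (Z p) v) * (ρ*ρ)
    rw [sq, hρ2]
    ring
  -- now fix a screen vector v and compute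
  have hξdp := hξd p hp
  have hNdp := hNd p hp
  have key1 : ∀ v : E (n + 2), eta v (ξ p) = 0 → eta v (N p) = 0 →
      eta (Z p) (fderiv ℝ ξ p v) = (a / c) * (φ p * eta (Z p) v) := by
    intro v hv1 hv2
    have h := hkey ξ hξdp (hangξ p hp) v hv1 hv2
    rw [fderiv_eta hZdp hξdp v, hZv v, eta_smul_left, eta_comm v (ξ p)] at h
    rw [eta_comm (ξ p) v] at h
    -- h : eta (Z p) (fderiv ξ v) + φ p * eta v (ξ p) = ...
    rw [hv1] at h
    simpa [ha_def] using h
  have key2 : ∀ v : E (n + 2), eta v (ξ p) = 0 → eta v (N p) = 0 →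
      eta (Z p) (fderiv ℝ N p v) = (b / c) * (φ p * eta (Z p) v) := by
    intro v hv1 hv2
    have h := hkey N hNdp (hangN p hp) v hv1 hv2
    rw [fderiv_eta hZdp hNdp v, hZv v, eta_smul_left, eta_comm v (N p)] at h
    rw [eta_comm (N p) v] at h
    rw [hv2] at h
    simpa [hb_def] using h
  -- screen property of the operators
  have hξξp := hξξ p hp
  have hNNp := hNN p hp
  have hξNp := hξN p hp
  have hAstar_xi : ∀ v, eta (Astar ξ N p v) (ξ p) = 0 := by
    intro v
    rw [Astar, eta_neg_left, sproj_screen_xi hξξp hξNp]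
    ring
  have hAstar_N : ∀ v, eta (Astar ξ N p v) (N p) = 0 := by
    intro v
    rw [Astar, eta_neg_left, sproj_screen_N hNNp hξNp]
    ring
  have hAN_xi : ∀ v, eta (AN ξ N p v) (ξ p) = 0 := by
    intro v
    rw [AN, eta_neg_left, sproj_screen_xi hξξp hξNp]
    ring
  have hAN_N : ∀ v, eta (AN ξ N p v) (N p) = 0 := by
    intro v
    rw [AN, eta_neg_left, sproj_screen_N hNNp hξNp]
    ring
  have hZs_xi : eta (Zstar ξ N Z p) (ξ p) = 0 := sproj_screen_xi hξξp hξNp _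
  have hZs_N : eta (Zstar ξ N Z p) (N p) = 0 := sproj_screen_N hNNp hξNp _
  -- eta of Z against sproj-type values
  have hZAstar : ∀ v : E (n + 2), eta v (ξ p) = 0 → eta v (N p) = 0 →
      eta (Z p) (Astar ξ N p v) = -(a / c) * (φ p * eta (Z p) v) - tau ξ N p v * a := by
    intro v hv1 hv2
    rw [Astar, sproj, eta_comm (Z p), eta_neg_left, eta_sub_left, eta_sub_left,
      eta_smul_left, eta_smul_left]
    rw [hdξξ v, hdξN v]
    rw [eta_comm (fderiv ℝ ξ p v) (Z p), key1 v hv1 hv2]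
    rw [eta_comm (ξ p) (Z p), eta_comm (N p) (Z p), ← ha_def, ← hb_def]
    rw [tau]
    ring
  have hZAN : ∀ v : E (n + 2), eta v (ξ p) = 0 → eta v (N p) = 0 →
      eta (Z p) (AN ξ N p v) = -(b / c) * (φ p * eta (Z p) v) + tau ξ N p v * b := by
    intro v hv1 hv2
    rw [AN, sproj, eta_comm (Z p), eta_neg_left, eta_sub_left, eta_sub_left,
      eta_smul_left, eta_smul_left]
    rw [hdNN v]
    rw [eta_comm (fderiv ℝ N p v) (Z p), key2 v hv1 hv2]
    rw [eta_comm (ξ p) (Z p), eta_comm (N p) (Z p), ← ha_def, ← hb_def]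
    rw [tau]
    ring
  -- the eigenvalue
  set lam : ℝ := -2 * ε * (eta (Z p) (ξ p) / Real.sqrt (ε * eta (Z p) (Z p))) *
      (eta (Z p) (N p) / Real.sqrt (ε * eta (Z p) (Z p))) * φ p with hlam_def
  have hlam : lam = -2 * a * b * φ p / c := by
    rw [hlam_def, ← ha_def, ← hb_def, ← hc_def, ← hρ_def]
    field_simp
    -- -2 * ε * a * b * φ p * c = -2 * a * b * φ p * (ρ * ρ)
    rw [sq, hρ2]
    ring
  -- reduce eta against Z p to eta against Zstar
  have hZsv : ∀ v : E (n + 2), eta v (ξ p) = 0 → eta v (N p) = 0 →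
      eta (Zstar ξ N Z p) v = eta (Z p) v := by
    intro v hv1 hv2
    rw [Zstar, sproj, eta_sub_left, eta_sub_left, eta_smul_left, eta_smul_left,
      eta_comm (ξ p) v, eta_comm (N p) v, hv1, hv2]
    ring
  -- the main identity against screen vectors
  have hmain : ∀ v : E (n + 2), eta v (ξ p) = 0 → eta v (N p) = 0 →
      eta (AZperp ξ N Z p (Zstar ξ N Z p)) v = eta (lam • Zstar ξ N Z p) v := by
    intro v hv1 hv2
    have hAsymZ := hAsym p hp (Zstar ξ N Z p) v hZs_xi hZs_N hv1 hv2
    have hANsymZ := hANsym p hp (Zstar ξ N Z p) v hZs_xi hZs_N hv1 hv2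
    have hZsAstar : eta (Zstar ξ N Z p) (Astar ξ N p v) = eta (Z p) (Astar ξ N p v) :=
      hZsv (Astar ξ N p v) (hAstar_xi v) (hAstar_N v)
    have hZsAN : eta (Zstar ξ N Z p) (AN ξ N p v) = eta (Z p) (AN ξ N p v) :=
      hZsv (AN ξ N p v) (hAN_xi v) (hAN_N v)
    rw [AZperp, eta_add_left, eta_smul_left, eta_smul_left, hAsymZ, hANsymZ]
    rw [eta_comm (Zstar ξ N Z p) (Astar ξ N p v)] at hZsAstar
    rw [eta_comm (Zstar ξ N Z p) (AN ξ N p v)] at hZsAN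
    rw [eta_comm (Zstar ξ N Z p) (Astar ξ N p v), eta_comm (Zstar ξ N Z p) (AN ξ N p v)] 
    rw [eta_comm (Astar ξ N p v) (Zstar ξ N Z p)] at hZsAstar
    rw [eta_comm (AN ξ N p v) (Zstar ξ N Z p)] at hZsAN
    rw [eta_comm (Astar ξ N p v) (Zstar ξ N Z p), eta_comm (AN ξ N p v) (Zstar ξ N Z p),
      hZsAstar, hZsAN]
    rw [hZAstar v hv1 hv2, hZAN v hv1 hv2]
    rw [eta_smul_left, hZsv v hv1 hv2, hlam, ← ha_def, ← hb_def]
    field_simp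
    ring
  -- screen-ness of both sides
  have hL_xi : eta (AZperp ξ N Z p (Zstar ξ N Z p)) (ξ p) = 0 := by
    rw [AZperp, eta_add_left, eta_smul_left, eta_smul_left, hAstar_xi, hAN_xi]; ring
  have hL_N : eta (AZperp ξ N Z p (Zstar ξ N Z p)) (N p) = 0 := by
    rw [AZperp, eta_add_left, eta_smul_left, eta_smul_left, hAstar_N, hAN_N]; ring
  have hR_xi : eta (lam • Zstar ξ N Z p) (ξ p) = 0 := by
    rw [eta_smul_left, hZs_xi]; ring
  have hR_N : eta (lam • Zstar ξ N Z p) (N p) = 0 := by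
    rw [eta_smul_left, hZs_N]; ring
  -- extend the identity to all vectors
  have hall : ∀ u : E (n + 2),
      eta (AZperp ξ N Z p (Zstar ξ N Z p) - lam • Zstar ξ N Z p) u = 0 := by
    intro u
    set W' : E (n + 2) := AZperp ξ N Z p (Zstar ξ N Z p) - lam • Zstar ξ N Z p with hW'
    have hWx : eta W' (ξ p) = 0 := by rw [hW', eta_sub_left, hL_xi, hR_xi]; ring
    have hWN : eta W' (N p) = 0 := by rw [hW', eta_sub_left, hL_N, hR_N]; ring
    have hsx : eta (sproj (ξ p) (N p) u) (ξ p) = 0 := sproj_screen_xi hξξp hξNp u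
    have hsN : eta (sproj (ξ p) (N p) u) (N p) = 0 := sproj_screen_N hNNp hξNp u
    have hs := hmain (sproj (ξ p) (N p) u) hsx hsN
    have hWs : eta W' (sproj (ξ p) (N p) u) = 0 := by
      rw [hW', eta_sub_left, hs]; ring
    have hexp : eta W' (sproj (ξ p) (N p) u) =
        eta W' u - eta u (N p) * eta W' (ξ p) - eta u (ξ p) * eta W' (N p) := by
      rw [sproj, eta_sub_right, eta_sub_right, eta_smul_right, eta_smul_right]
    rw [hexp, hWx, hWN] at hWs
    linarith
  have := eta_nondeg hall
  rw [sub_eq_zero] at this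
  rw [this, hlam_def]

end
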